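/- The truncated double monomial quasisymmetric polynomials M_{n,α}(𝐱,𝐲), as α ranges over compositions of length at most n, are linearly independent over the ring Λ = ℤ[y₁,y₂,…]. -/

import Mathlib

open MvPolynomial Finset

open Classical in
/-- The truncated double monomial quasisymmetric polynomial
`M_{n,α}(𝐱,𝐲) = Σ_{1≤i₁<⋯<i_k≤n} ∏_{ℓ=1}^{k} ∏_{j=1}^{a_ℓ} (x_{i_ℓ} − y_j)`
in `ℤ[y₁,y₂,…][x₁,…,xₙ]`, where `y_j` is `MvPolynomial.X j`. -/
noncomputable def doubleM (n : ℕ) (α : List ℕ) :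
    MvPolynomial (Fin n) (MvPolynomial ℕ ℤ) :=
  ∑ i ∈ Finset.univ.filter (fun i : Fin α.length → Fin n => StrictMono i),
    ∏ ℓ : Fin α.length, ∏ j ∈ Finset.range (α.get ℓ),
      (X (i ℓ) - C (MvPolynomial.X (j + 1)))

namespace DoubleMAux

local notation "Λ" => MvPolynomial ℕ ℤ

/-- The single variable polynomial `∏_{j<b} (T - y_{j+1})` over `Λ`. -/
noncomputable def Q (b : ℕ) : Polynomial Λ :=
  ∏ j ∈ Finset.range b, (Polynomial.X - Polynomial.C (MvPolynomial.X (j + 1)))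

lemma Q_monic (b : ℕ) : (Q b).Monic :=
  Polynomial.monic_prod_of_monic _ _ fun _ _ => Polynomial.monic_X_sub_C _

lemma Q_natDegree (b : ℕ) : (Q b).natDegree = b := by
  rw [Q, Polynomial.natDegree_prod_of_monic _ _ fun _ _ => Polynomial.monic_X_sub_C _]
  simp

lemma Q_coeff_self (b : ℕ) : (Q b).coeff b = 1 := by
  have := (Q_monic b).coeff_natDegree
  rwa [Q_natDegree] at this

/-- Expansion of the basic factor product in a single variable. -/
lemma P_expand (n : ℕ) (v : Fin n) (b : ℕ) :
    (∏ j ∈ Finset.range b, (X v - C (MvPolynomial.X (j + 1)) : MvPolynomial (Fin n) Λ))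
      = ∑ e ∈ Finset.range (b + 1), C ((Q b).coeff e) * X v ^ e := by
  have h1 : (∏ j ∈ Finset.range b, (X v - C (MvPolynomial.X (j + 1)) : MvPolynomial (Fin n) Λ))
      = Polynomial.aeval (X v : MvPolynomial (Fin n) Λ) (Q b) := by
    rw [Q, map_prod]
    refine Finset.prod_congr rfl fun j _ => ?_
    simp [Polynomial.aeval_X, Polynomial.aeval_C, MvPolynomial.algebraMap_eq]
  rw [h1, Polynomial.aeval_eq_sum_range' (n := b + 1) (by rw [Q_natDegree]; omega)]
  exact Finset.sum_congr rfl fun e _ => by rw [smul_eq_C_mul]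

lemma prod_X_pow {σ : Type*} {ι : Type*} (s : Finset ι) (v : ι → σ) (e : ι → ℕ) :
    (∏ ℓ ∈ s, (X (v ℓ) : MvPolynomial σ Λ) ^ e ℓ)
      = monomial (∑ ℓ ∈ s, Finsupp.single (v ℓ) (e ℓ)) 1 := by
  classical
  induction s using Finset.cons_induction with
  | empty => simp
  | cons a s ha ih =>
    rw [Finset.prod_cons, Finset.sum_cons, ih, X_pow_eq_monomial, monomial_mul, one_mul]

/-- The exponent of the distinguished monomial attached to a composition `α`. -/
noncomputable def mexp (n : ℕ) (α : List ℕ) (h : α.length ≤ n) : Fin n →₀ ℕ :=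
  ∑ ℓ : Fin α.length, Finsupp.single (Fin.castLE h ℓ) (α.get ℓ)

lemma sum_single_apply_of_inj {n k : ℕ} {i : Fin k → Fin n} (hi : Function.Injective i)
    (e : Fin k → ℕ) (ℓ : Fin k) :
    (∑ ℓ' : Fin k, Finsupp.single (i ℓ') (e ℓ')) (i ℓ) = e ℓ := by
  rw [Finsupp.finset_sum_apply]
  rw [Finset.sum_eq_single ℓ]
  · simp
  · intro b _ hb
    rw [Finsupp.single_apply, if_neg fun h => hb (hi h)]
  · simp

lemma sum_single_apply_eq_zero {n k : ℕ} {i : Fin k → Fin n} {e : Fin k → ℕ} {v : Fin n}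
    (hv : ∀ ℓ, i ℓ ≠ v) : (∑ ℓ' : Fin k, Finsupp.single (i ℓ') (e ℓ')) v = 0 := by
  rw [Finsupp.finset_sum_apply]
  exact Finset.sum_eq_zero fun ℓ _ => by rw [Finsupp.single_apply, if_neg (hv ℓ)]

lemma total_sum {n k : ℕ} (i : Fin k → Fin n) (e : Fin k → ℕ) :
    ∑ v : Fin n, (∑ ℓ : Fin k, Finsupp.single (i ℓ) (e ℓ)) v = ∑ ℓ : Fin k, e ℓ := by
  simp only [Finsupp.finset_sum_apply]
  rw [Finset.sum_comm]
  refine Finset.sum_congr rfl fun ℓ _ => ?_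
  simp [Finsupp.single_apply]

lemma list_sum_eq (l : List ℕ) : ∑ ℓ : Fin l.length, l.get ℓ = l.sum := by
  conv_rhs => rw [← List.ofFn_get l]
  rw [Fin.sum_ofFn]

/-- Key combinatorial lemma: if `β.sum ≤ α.sum` and a monomial of `M_β` coincides with the
distinguished monomial of `α`, then `α = β` and the data is the canonical one. -/
lemma key {n : ℕ} (α β : List ℕ) (hα : α.length ≤ n) (hβ : β.length ≤ n)
    (hαp : ∀ a ∈ α, 0 < a) (hβp : ∀ a ∈ β, 0 < a) (hd : β.sum ≤ α.sum)
    (i : Fin β.length → Fin n) (hi : StrictMono i) (e : Fin β.length → ℕ)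
    (he : ∀ ℓ, e ℓ ≤ β.get ℓ)
    (heq : (∑ ℓ : Fin β.length, Finsupp.single (i ℓ) (e ℓ)) = mexp n α hα) :
    α = β ∧ (∀ ℓ, i ℓ = Fin.castLE hβ ℓ) ∧ (∀ ℓ, e ℓ = β.get ℓ) := by
  classical
  have hc : StrictMono (Fin.castLE hα) := Fin.strictMono_castLE hα
  have hsumval : ∑ ℓ : Fin β.length, e ℓ = α.sum := by
    have h : (∑ v : Fin n, (∑ ℓ : Fin β.length, Finsupp.single (i ℓ) (e ℓ)) v)
        = ∑ v : Fin n, (mexp n α hα) v := by rw [heq]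
    rw [total_sum] at h
    have h2 : ∑ v : Fin n, (mexp n α hα) v = α.sum := by
      rw [mexp, total_sum, list_sum_eq]
    omega
  -- e = β.get pointwise
  have hesum : ∑ ℓ : Fin β.length, e ℓ = ∑ ℓ : Fin β.length, β.get ℓ := by
    have h1 : ∑ ℓ : Fin β.length, e ℓ ≤ ∑ ℓ : Fin β.length, β.get ℓ :=
      Finset.sum_le_sum fun ℓ _ => he ℓ
    have h2 : ∑ ℓ : Fin β.length, β.get ℓ = β.sum := list_sum_eq β
    omega
  have he' : ∀ ℓ, e ℓ = β.get ℓ := by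
    have := (Finset.sum_eq_sum_iff_of_le (fun ℓ _ => he ℓ)).1 hesum
    exact fun ℓ => this ℓ (Finset.mem_univ ℓ)
  have hepos : ∀ ℓ, 0 < e ℓ := fun ℓ => (he' ℓ) ▸ hβp _ (List.get_mem β ℓ)
  have hapos : ∀ ℓ : Fin α.length, 0 < α.get ℓ := fun ℓ => hαp _ (List.get_mem α ℓ)
  -- supports agree
  have hms : ∀ ℓ, i ℓ ∈ Finset.image (Fin.castLE hα) Finset.univ := by
    intro ℓ
    by_contra hns
    have h0 : mexp n α hα (i ℓ) = 0 := by
      refine sum_single_apply_eq_zero fun ℓ' hℓ' => ?_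
      exact hns (hℓ' ▸ Finset.mem_image_of_mem _ (Finset.mem_univ ℓ'))
    have h1 : (∑ ℓ' : Fin β.length, Finsupp.single (i ℓ') (e ℓ')) (i ℓ) = e ℓ :=
      sum_single_apply_of_inj hi.injective e ℓ
    rw [heq] at h1
    have := hepos ℓ
    omega
  have hsm : ∀ v ∈ Finset.image (Fin.castLE hα) Finset.univ, v ∈ Finset.image i Finset.univ := by
    intro v hv
    rw [Finset.mem_image] at hv
    obtain ⟨ℓ', -, rfl⟩ := hv
    by_contra hns
    have h0 : (∑ ℓ : Fin β.length, Finsupp.single (i ℓ) (e ℓ)) (Fin.castLE hα ℓ') = 0 := by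
      refine sum_single_apply_eq_zero fun ℓ hℓ => ?_
      exact hns (hℓ ▸ Finset.mem_image_of_mem _ (Finset.mem_univ ℓ))
    have h1 : mexp n α hα (Fin.castLE hα ℓ') = α.get ℓ' :=
      sum_single_apply_of_inj hc.injective _ ℓ'
    rw [heq] at h0
    have := hapos ℓ'
    omega
  have himg : Finset.image i Finset.univ = Finset.image (Fin.castLE hα) Finset.univ :=
    Finset.Subset.antisymm
      (fun v hv => by
        rw [Finset.mem_image] at hv; obtain ⟨ℓ, -, rfl⟩ := hv; exact hms ℓ)
      hsm
  have hscard : (Finset.image (Fin.castLE hα) Finset.univ).card = α.length := by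
    rw [Finset.card_image_of_injective _ hc.injective, Finset.card_univ, Fintype.card_fin]
  have hlen : β.length = α.length := by
    have : (Finset.image i Finset.univ).card = β.length := by
      rw [Finset.card_image_of_injective _ hi.injective, Finset.card_univ, Fintype.card_fin]
    rw [himg, hscard] at this
    omega
  have hscard' : (Finset.image (Fin.castLE hα) Finset.univ).card = β.length := by
    rw [hscard, hlen]
  -- i is the canonical strictly monotone map
  have hi_eq : ∀ ℓ, i ℓ = Fin.castLE hβ ℓ := by
    have h1 := Finset.orderEmbOfFin_unique hscard' hms hi
    have h2 : ∀ ℓ : Fin β.length, Fin.castLE hβ ℓ ∈ Finset.image (Fin.castLE hα) Finset.univ := by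
      intro ℓ
      rw [Finset.mem_image]
      refine ⟨⟨ℓ.val, by omega⟩, Finset.mem_univ _, ?_⟩
      ext; simp
    have h3 := Finset.orderEmbOfFin_unique hscard' h2 (Fin.strictMono_castLE hβ)
    intro ℓ
    rw [congrFun h1 ℓ, congrFun h3 ℓ]
  -- α = β
  have hget : ∀ ℓ : Fin β.length, α.get ⟨ℓ.val, by omega⟩ = β.get ℓ := by
    intro ℓ
    have h1 : (∑ ℓ' : Fin β.length, Finsupp.single (i ℓ') (e ℓ')) (i ℓ) = e ℓ :=
      sum_single_apply_of_inj hi.injective e ℓ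
    have h2 : mexp n α hα (Fin.castLE hα ⟨ℓ.val, by omega⟩) = α.get ⟨ℓ.val, by omega⟩ :=
      sum_single_apply_of_inj hc.injective _ _
    have h3 : i ℓ = Fin.castLE hα ⟨ℓ.val, by omega⟩ := by
      rw [hi_eq ℓ]; ext; simp
    rw [heq, h3] at h1
    rw [h1, he'] at h2
    omega
  refine ⟨?_, hi_eq, he'⟩
  refine List.ext_get (by omega) fun ℓ h1 h2 => ?_
  exact hget ⟨ℓ, h2⟩

open Classical in
/-- Triangularity of the coefficient of the distinguished monomial. -/
lemma coeff_doubleM {n : ℕ} (α β : List ℕ) (hα : α.length ≤ n) (hβ : β.length ≤ n)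
    (hαp : ∀ a ∈ α, 0 < a) (hβp : ∀ a ∈ β, 0 < a) (hd : β.sum ≤ α.sum) :
    coeff (mexp n α hα) (doubleM n β) = if α = β then 1 else 0 := by
  rw [doubleM]
  have hterm : ∀ i : Fin β.length → Fin n,
      (∏ ℓ : Fin β.length, ∏ j ∈ Finset.range (β.get ℓ),
          (X (i ℓ) - C (MvPolynomial.X (j + 1)) : MvPolynomial (Fin n) Λ))
      = ∑ e ∈ Fintype.piFinset (fun ℓ : Fin β.length => Finset.range (β.get ℓ + 1)),
          C (∏ ℓ : Fin β.length, (Q (β.get ℓ)).coeff (e ℓ)) *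
            monomial (∑ ℓ : Fin β.length, Finsupp.single (i ℓ) (e ℓ)) 1 := by
    intro i
    calc (∏ ℓ : Fin β.length, ∏ j ∈ Finset.range (β.get ℓ),
          (X (i ℓ) - C (MvPolynomial.X (j + 1)) : MvPolynomial (Fin n) Λ))
        = ∏ ℓ : Fin β.length, ∑ e ∈ Finset.range (β.get ℓ + 1),
            C ((Q (β.get ℓ)).coeff e) * X (i ℓ) ^ e :=
          Finset.prod_congr rfl fun ℓ _ => P_expand n (i ℓ) (β.get ℓ)
      _ = ∑ e ∈ Fintype.piFinset (fun ℓ : Fin β.length => Finset.range (β.get ℓ + 1)),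
            ∏ ℓ : Fin β.length, (C ((Q (β.get ℓ)).coeff (e ℓ)) * X (i ℓ) ^ e ℓ) :=
          Finset.prod_univ_sum _ _
      _ = _ := by
          refine Finset.sum_congr rfl fun e _ => ?_
          rw [Finset.prod_mul_distrib, ← map_prod, prod_X_pow]
  have hcoeff : ∀ i : Fin β.length → Fin n,
      coeff (mexp n α hα)
        (∏ ℓ : Fin β.length, ∏ j ∈ Finset.range (β.get ℓ),
          (X (i ℓ) - C (MvPolynomial.X (j + 1)) : MvPolynomial (Fin n) Λ))
      = ∑ e ∈ Fintype.piFinset (fun ℓ : Fin β.length => Finset.range (β.get ℓ + 1)),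
          (∏ ℓ : Fin β.length, (Q (β.get ℓ)).coeff (e ℓ)) *
            (if (∑ ℓ : Fin β.length, Finsupp.single (i ℓ) (e ℓ)) = mexp n α hα
              then 1 else 0) := by
    intro i
    rw [hterm i, coeff_sum]
    exact Finset.sum_congr rfl fun e _ => by rw [coeff_C_mul, coeff_monomial]
  rw [coeff_sum]
  by_cases hab : α = β
  · subst hab
    rw [if_pos rfl]
    rw [Finset.sum_eq_single_of_mem (fun ℓ : Fin α.length => Fin.castLE hα ℓ)
      (by simpa using Fin.strictMono_castLE hα)]
    · rw [hcoeff]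
      rw [Finset.sum_eq_single_of_mem (fun ℓ : Fin α.length => α.get ℓ)
        (by simp [Fintype.mem_piFinset])]
      · have hr : (∑ ℓ : Fin α.length,
            Finsupp.single (Fin.castLE hα ℓ) ((fun ℓ => α.get ℓ) ℓ)) = mexp n α hα := rfl
        rw [if_pos hr]
        simp [Q_coeff_self]
      · intro e hee hne
        rw [Fintype.mem_piFinset] at hee
        have he : ∀ ℓ, e ℓ ≤ α.get ℓ := fun ℓ => by
          have := hee ℓ; rw [Finset.mem_range] at this; omega
        by_cases hmeq : (∑ ℓ : Fin α.length, Finsupp.single (Fin.castLE hα ℓ) (e ℓ))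
            = mexp n α hα
        · obtain ⟨-, -, h3⟩ := key α α hα hα hαp hαp le_rfl _
            (Fin.strictMono_castLE hα) e he hmeq
          exact absurd (funext h3) hne
        · rw [if_neg hmeq, mul_zero]
    · intro i hi hne
      rw [Finset.mem_filter] at hi
      rw [hcoeff]
      refine Finset.sum_eq_zero fun e hee => ?_
      rw [Fintype.mem_piFinset] at hee
      have he : ∀ ℓ, e ℓ ≤ α.get ℓ := fun ℓ => by
        have := hee ℓ; rw [Finset.mem_range] at this; omega
      by_cases hmeq : (∑ ℓ : Fin α.length, Finsupp.single (i ℓ) (e ℓ)) = mexp n α hα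
      · obtain ⟨-, h2, -⟩ := key α α hα hα hαp hαp le_rfl i hi.2 e he hmeq
        exact absurd (funext h2) hne
      · rw [if_neg hmeq, mul_zero]
  · rw [if_neg hab]
    refine Finset.sum_eq_zero fun i hi => ?_
    rw [Finset.mem_filter] at hi
    rw [hcoeff]
    refine Finset.sum_eq_zero fun e hee => ?_
    rw [Fintype.mem_piFinset] at hee
    have he : ∀ ℓ, e ℓ ≤ β.get ℓ := fun ℓ => by
      have := hee ℓ; rw [Finset.mem_range] at this; omega
    by_cases hmeq : (∑ ℓ : Fin β.length, Finsupp.single (i ℓ) (e ℓ)) = mexp n α hα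
    · obtain ⟨h1, -, -⟩ := key α β hα hβ hαp hβp hd i hi.2 e he hmeq
      exact absurd h1 hab
    · rw [if_neg hmeq, mul_zero]

end DoubleMAux

open DoubleMAux in
/-- The `M_{n,α}(𝐱,𝐲)`, as `α` ranges over compositions of length at most `n`, are
linearly independent over `Λ = ℤ[y₁,y₂,…]`. -/
theorem doubleM_linearIndependent (n : ℕ) :
    LinearIndependent (MvPolynomial ℕ ℤ)
      (fun α : {l : List ℕ // l.length ≤ n ∧ ∀ a ∈ l, 0 < a} => doubleM n α.1) := by
  classical
  rw [linearIndependent_iff']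
  suffices H : ∀ s : Finset {l : List ℕ // l.length ≤ n ∧ ∀ a ∈ l, 0 < a},
      ∀ g : {l : List ℕ // l.length ≤ n ∧ ∀ a ∈ l, 0 < a} → MvPolynomial ℕ ℤ,
      (∑ β ∈ s, g β • doubleM n β.1) = 0 → ∀ β ∈ s, g β = 0 by
    exact H
  intro s
  induction s using Finset.strongInduction with
  | _ s ih =>
    intro g hsum β hβ
    have hne : s.Nonempty := ⟨β, hβ⟩
    obtain ⟨m, hm, hmax⟩ := Finset.exists_max_image s (fun γ => γ.1.sum) hne
    have hgm : g m = 0 := by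
      have h0 := congrArg (MvPolynomial.coeff (mexp n m.1 m.2.1)) hsum
      rw [MvPolynomial.coeff_sum] at h0
      rw [MvPolynomial.coeff_zero] at h0
      have h1 : ∀ γ ∈ s, MvPolynomial.coeff (mexp n m.1 m.2.1) (g γ • doubleM n γ.1)
          = g γ * (if m.1 = γ.1 then 1 else 0) := by
        intro γ hγ
        rw [MvPolynomial.coeff_smul, coeff_doubleM m.1 γ.1 m.2.1 γ.2.1 m.2.2 γ.2.2
          (hmax γ hγ), smul_eq_mul]
      rw [Finset.sum_congr rfl h1] at h0
      rw [Finset.sum_eq_single_of_mem m hm (fun γ _ hγ => by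
        rw [if_neg fun h => hγ (Subtype.ext h.symm), mul_zero])] at h0
      rw [if_pos rfl, mul_one] at h0
      exact h0
    have hsum' : ∑ γ ∈ s.erase m, g γ • doubleM n γ.1 = 0 := by
      rw [← Finset.sum_erase_add s _ hm, hgm, zero_smul, add_zero] at hsum
      exact hsum
    by_cases hβm : β = m
    · rw [hβm]; exact hgm
    · exact ih (s.erase m) (Finset.erase_ssubset hm) g hsum' β
        (Finset.mem_erase.2 ⟨hβm, hβ⟩)
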